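/- (Komiya's polytopal KKMS theorem, special case Q = Δ₁ × Δ₁, a square) Let Q be the square [0,1]² (product of two 1-simplices). Assign to each face F of Q a point q(F) ∈ F and an open set B_F ⊆ Q such that every face F' satisfies F' ⊆ ⋃_{F ⊆ F'} B_F. Then there exists a collection 𝓕 of faces of Q with q(Q) ∈ conv{q(F) : F ∈ 𝓕} and ⋂_{F ∈ 𝓕} B_F ≠ ∅. -/

import Mathlib

open Set in
/-- A side of the unit interval face structure: `none` is all of [0,1],
`some false` is {0}, `some true` is {1}. -/
def komiyaSide : Option Bool → Set ℝ
  | none => Set.Icc 0 1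
  | some false => {0}
  | some true => {1}

/-- A face of the square Q = [0,1]², indexed by a pair of sides. -/
def komiyaFace (m : Option Bool × Option Bool) : Set (ℝ × ℝ) :=
  komiyaSide m.1 ×ˢ komiyaSide m.2

open Finset Set Filter Topology

section KomiyaAux

def spDoor (a b : Fin 3) : ZMod 2 :=
  if (a = 0 ∧ b = 1) ∨ (a = 1 ∧ b = 0) then 1 else 0

lemma sp_telescope (n : ℕ) (g : ℕ → ZMod 2) :
    ∑ j ∈ range n, (g j + g (j + 1)) = g 0 + g n := by
  induction n with
  | zero => simp; exact (CharTwo.add_self_eq_zero _).symm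
  | succ n ih =>
    rw [sum_range_succ, ih]
    linear_combination CharTwo.add_self_eq_zero (g n)

lemma sp_odd_1d (n : ℕ) (g : ℕ → Fin 3) (h2 : ∀ i ≤ n, g i ≠ 2) :
    ∑ i ∈ range n, spDoor (g i) (g (i + 1)) = if g 0 = g n then 0 else 1 := by
  induction n with
  | zero => simp
  | succ n ih =>
    rw [sum_range_succ, ih (fun i hi => h2 i (hi.trans n.le_succ))]
    have hA := h2 0 (Nat.zero_le _)
    have hB := h2 n (Nat.le_succ _)
    have hC := h2 (n+1) le_rfl
    revert hA hB hC
    generalize g 0 = A; generalize g n = B; generalize g (n+1) = C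
    revert A B C; decide

lemma sp_dec (a b a' b' : Fin 3)
    (h : (spDoor a b + spDoor b b' + spDoor a b') +
         (spDoor a a' + spDoor a' b' + spDoor a b') = 1) :
    (a = 0 ∨ b = 0 ∨ a' = 0 ∨ b' = 0) ∧
    (a = 1 ∨ b = 1 ∨ a' = 1 ∨ b' = 1) ∧
    (a = 2 ∨ b = 2 ∨ a' = 2 ∨ b' = 2) := by
  revert h; revert a b a' b'; decide

lemma sperner2d (n : ℕ) (c : ℕ → ℕ → Fin 3)
    (hL : ∀ j ≤ n, c 0 j = 0) (hR : ∀ j ≤ n, c n j ≠ 0)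
    (hB : ∀ i ≤ n, c i 0 ≠ 2) (hT : ∀ i ≤ n, c i n ≠ 1) (hn : 0 < n) :
    ∃ i < n, ∃ j < n,
      (c i j = 0 ∨ c (i+1) j = 0 ∨ c i (j+1) = 0 ∨ c (i+1) (j+1) = 0) ∧
      (c i j = 1 ∨ c (i+1) j = 1 ∨ c i (j+1) = 1 ∨ c (i+1) (j+1) = 1) ∧
      (c i j = 2 ∨ c (i+1) j = 2 ∨ c i (j+1) = 2 ∨ c (i+1) (j+1) = 2) := by
  classical
  set H : ℕ → ℕ → ZMod 2 := fun i j => spDoor (c i j) (c (i+1) j) with hH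
  set V : ℕ → ℕ → ZMod 2 := fun i j => spDoor (c i j) (c i (j+1)) with hV
  set d : ℕ → ℕ → ZMod 2 := fun i j =>
    (spDoor (c i j) (c (i+1) j) + spDoor (c (i+1) j) (c (i+1) (j+1))
      + spDoor (c i j) (c (i+1) (j+1))) +
    (spDoor (c i j) (c i (j+1)) + spDoor (c i (j+1)) (c (i+1) (j+1))
      + spDoor (c i j) (c (i+1) (j+1))) with hd
  have key : ∑ i ∈ range n, ∑ j ∈ range n, d i j = 1 := by
    have hsplit : ∀ i j, d i j = (H i j + H i (j+1)) + (V i j + V (i+1) j) := by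
      intro i j
      simp only [hd, hH, hV]
      linear_combination CharTwo.add_self_eq_zero (spDoor (c i j) (c (i+1) (j+1)))
    calc ∑ i ∈ range n, ∑ j ∈ range n, d i j
        = ∑ i ∈ range n, ∑ j ∈ range n, ((H i j + H i (j+1)) + (V i j + V (i+1) j)) := by
          simp only [hsplit]
      _ = (∑ i ∈ range n, ∑ j ∈ range n, (H i j + H i (j+1)))
          + (∑ j ∈ range n, ∑ i ∈ range n, (V i j + V (i+1) j)) := by
          rw [Finset.sum_comm (s := range n) (t := range n)
              (f := fun j i => V i j + V (i+1) j), ← Finset.sum_add_distrib]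
          exact Finset.sum_congr rfl fun i _ => Finset.sum_add_distrib
      _ = (∑ i ∈ range n, (H i 0 + H i n)) + (∑ j ∈ range n, (V 0 j + V n j)) := by
          congr 1
          · exact Finset.sum_congr rfl fun i _ => sp_telescope n (H i)
          · exact Finset.sum_congr rfl fun j _ => sp_telescope n (fun i => V i j)
      _ = 1 := by
          have h1 : ∑ i ∈ range n, (H i 0 + H i n) = 1 := by
            have : ∀ i ∈ range n, (H i 0 + H i n) = H i 0 := by
              intro i hi
              have : H i n = 0 := by
                simp only [hH, spDoor]
                have := hT i (le_of_lt (mem_range.mp hi))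
                have := hT (i+1) (mem_range.mp hi)
                simp only [ite_eq_right_iff]
                rintro (⟨-, h⟩ | ⟨h, -⟩) <;> simp_all
              rw [this, add_zero]
            rw [Finset.sum_congr rfl this]
            have : ∑ i ∈ range n, H i 0 = if c 0 0 = c n 0 then 0 else 1 :=
              sp_odd_1d n (fun i => c i 0) hB
            rw [this, if_neg]
            rw [hL 0 (Nat.zero_le _)]
            exact fun h => hR 0 (Nat.zero_le _) h.symm
          have h2 : ∑ j ∈ range n, (V 0 j + V n j) = 0 := by
            apply Finset.sum_eq_zero
            intro j hj
            have hj' := mem_range.mp hj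
            have e1 : V 0 j = 0 := by
              simp only [hV, spDoor, hL j hj'.le, hL (j+1) hj']
              decide
            have e2 : V n j = 0 := by
              simp only [hV, spDoor]
              have := hR j hj'.le
              have := hR (j+1) hj'
              simp only [ite_eq_right_iff]
              rintro (⟨h, -⟩ | ⟨-, h⟩) <;> simp_all
            rw [e1, e2, add_zero]
          rw [h1, h2, add_zero]
  have : ∃ i ∈ range n, ∑ j ∈ range n, d i j ≠ 0 := by
    by_contra h
    push_neg at h
    rw [Finset.sum_eq_zero h] at key
    exact one_ne_zero key.symm
  obtain ⟨i, hi, hil⟩ := this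
  obtain ⟨j, hj, hjl⟩ := Finset.exists_ne_zero_of_sum_ne_zero hil
  refine ⟨i, mem_range.mp hi, j, mem_range.mp hj, ?_⟩
  have hd1 : d i j = 1 := by
    have : ∀ x : ZMod 2, x ≠ 0 → x = 1 := by decide
    exact this _ hjl
  exact sp_dec _ _ _ _ hd1


/-- Miranda labeling -/
noncomputable def mLab (u v : ℝ) : Fin 3 :=
  if u < 0 then 0 else if v < 0 then 1 else 2

lemma mLab0 {u v : ℝ} (h : mLab u v = 0) : u < 0 := by
  unfold mLab at h; split_ifs at h with h1 h2
  · exact h1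
  · exact absurd h (by decide)
  · exact absurd h (by decide)

lemma mLab1 {u v : ℝ} (h : mLab u v = 1) : 0 ≤ u ∧ v < 0 := by
  unfold mLab at h; split_ifs at h with h1 h2
  · exact absurd h (by decide)
  · exact ⟨le_of_not_gt h1, h2⟩
  · exact absurd h (by decide)

lemma mLab2 {u v : ℝ} (h : mLab u v = 2) : 0 ≤ v := by
  unfold mLab at h; split_ifs at h with h1 h2
  · exact absurd h (by decide)
  · exact absurd h (by decide)
  · exact le_of_not_gt h2

lemma mLab_eq0 {u v : ℝ} (h : u < 0) : mLab u v = 0 := if_pos h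

lemma mLab_ne0 {u v : ℝ} (h : 0 ≤ u) : mLab u v ≠ 0 := by
  unfold mLab; rw [if_neg (not_lt.mpr h)]; split_ifs <;> decide

lemma mLab_ne2 {u v : ℝ} (h : v < 0) : mLab u v ≠ 2 := by
  unfold mLab; split_ifs <;> decide

lemma mLab_ne1 {u v : ℝ} (h : 0 ≤ v) : mLab u v ≠ 1 := by
  unfold mLab; rw [if_neg (not_lt.mpr h)]; split_ifs <;> decide

lemma miranda2d (F : ℝ × ℝ → ℝ × ℝ)
    (hF : ContinuousOn F (Icc (0:ℝ) 1 ×ˢ Icc (0:ℝ) 1))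
    (hl : ∀ y ∈ Icc (0:ℝ) 1, (F (0, y)).1 < 0)
    (hr : ∀ y ∈ Icc (0:ℝ) 1, 0 < (F (1, y)).1)
    (hb : ∀ x ∈ Icc (0:ℝ) 1, (F (x, 0)).2 < 0)
    (ht : ∀ x ∈ Icc (0:ℝ) 1, 0 < (F (x, 1)).2) :
    ∃ z ∈ Icc (0:ℝ) 1 ×ˢ Icc (0:ℝ) 1, F z = 0 := by
  classical
  set Q : Set (ℝ × ℝ) := Icc (0:ℝ) 1 ×ˢ Icc (0:ℝ) 1 with hQdef
  have main : ∀ k : ℕ, ∃ P A B C : ℝ × ℝ, P ∈ Q ∧ A ∈ Q ∧ B ∈ Q ∧ C ∈ Q ∧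
      dist A P ≤ 1/(k+1) ∧ dist B P ≤ 1/(k+1) ∧ dist C P ≤ 1/(k+1) ∧
      (F A).1 < 0 ∧ 0 ≤ (F B).1 ∧ (F B).2 < 0 ∧ 0 ≤ (F C).2 := by
    intro k
    have hnR : (0:ℝ) < (k:ℝ) + 1 := by positivity
    set gp : ℕ → ℕ → ℝ × ℝ := fun i j => ((i:ℝ)/((k:ℝ)+1), (j:ℝ)/((k:ℝ)+1)) with hgp
    have hnc : ∀ j : ℕ, j ≤ k + 1 → (j:ℝ)/((k:ℝ)+1) ∈ Icc (0:ℝ) 1 := by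
      intro j hj
      constructor
      · positivity
      · rw [div_le_one hnR]
        have : (j:ℝ) ≤ (k:ℝ)+1 := by exact_mod_cast hj
        linarith
    have hmem : ∀ i ≤ k+1, ∀ j ≤ k+1, gp i j ∈ Q := by
      intro i hi j hj
      exact ⟨hnc i hi, hnc j hj⟩
    have hdist : ∀ i j a b : ℕ, a ≤ 1 → b ≤ 1 →
        dist (gp (i+a) (j+b)) (gp i j) ≤ 1/((k:ℝ)+1) := by
      intro i j a b ha hb
      rw [Prod.dist_eq]
      have hgen : ∀ m c : ℕ, c ≤ 1 →
          dist (((m+c : ℕ):ℝ)/((k:ℝ)+1)) ((m:ℝ)/((k:ℝ)+1)) ≤ 1/((k:ℝ)+1) := by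
        intro m c hc
        rw [Real.dist_eq, div_sub_div_same]
        push_cast
        rw [add_sub_cancel_left, abs_of_nonneg (by positivity)]
        gcongr
        exact_mod_cast hc
      exact max_le (hgen i a ha) (hgen j b hb)
    set c : ℕ → ℕ → Fin 3 := fun i j => mLab (F (gp i j)).1 (F (gp i j)).2 with hc
    have hgL : ∀ j : ℕ, gp 0 j = ((0:ℝ), (j:ℝ)/((k:ℝ)+1)) := by
      intro j; simp only [hgp, Nat.cast_zero, zero_div]
    have hgR : ∀ j : ℕ, gp (k+1) j = ((1:ℝ), (j:ℝ)/((k:ℝ)+1)) := by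
      intro j; simp only [hgp]; rw [Prod.mk.injEq]
      refine ⟨?_, rfl⟩
      push_cast
      exact div_self hnR.ne'
    have hgB : ∀ i : ℕ, gp i 0 = ((i:ℝ)/((k:ℝ)+1), (0:ℝ)) := by
      intro i; simp only [hgp, Nat.cast_zero, zero_div]
    have hgT : ∀ i : ℕ, gp i (k+1) = ((i:ℝ)/((k:ℝ)+1), (1:ℝ)) := by
      intro i; simp only [hgp]; rw [Prod.mk.injEq]
      refine ⟨rfl, ?_⟩
      push_cast
      exact div_self hnR.ne'
    obtain ⟨i, hi, j, hj, h0, h1, h2⟩ := by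
      refine sperner2d (k+1) c ?_ ?_ ?_ ?_ (Nat.succ_pos k)
      · intro j hj
        simp only [hc]; rw [hgL j]
        exact mLab_eq0 (hl _ (hnc j hj))
      · intro j hj
        simp only [hc]; rw [hgR j]
        exact mLab_ne0 (hr _ (hnc j hj)).le
      · intro i hi
        simp only [hc]; rw [hgB i]
        exact mLab_ne2 (hb _ (hnc i hi))
      · intro i hi
        simp only [hc]; rw [hgT i]
        exact mLab_ne1 (ht _ (hnc i hi)).le
    have hcorner : ∀ a b : ℕ, a ≤ 1 → b ≤ 1 →
        gp (i+a) (j+b) ∈ Q ∧ dist (gp (i+a) (j+b)) (gp i j) ≤ 1/((k:ℝ)+1) := by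
      intro a b ha hb
      exact ⟨hmem _ (by omega) _ (by omega), hdist i j a b ha hb⟩
    have c00 := hcorner 0 0 (by norm_num) (by norm_num)
    have c10 := hcorner 1 0 le_rfl (by norm_num)
    have c01 := hcorner 0 1 (by norm_num) le_rfl
    have c11 := hcorner 1 1 le_rfl le_rfl
    simp only [Nat.add_zero] at c00 c10 c01 c11
    have hA : ∃ A, A ∈ Q ∧ dist A (gp i j) ≤ 1/((k:ℝ)+1) ∧ (F A).1 < 0 := by
      rcases h0 with h | h | h | h
      exacts [⟨_, c00.1, c00.2, mLab0 h⟩, ⟨_, c10.1, c10.2, mLab0 h⟩,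
        ⟨_, c01.1, c01.2, mLab0 h⟩, ⟨_, c11.1, c11.2, mLab0 h⟩]
    have hB' : ∃ B, B ∈ Q ∧ dist B (gp i j) ≤ 1/((k:ℝ)+1) ∧ 0 ≤ (F B).1 ∧ (F B).2 < 0 := by
      rcases h1 with h | h | h | h
      exacts [⟨_, c00.1, c00.2, mLab1 h⟩, ⟨_, c10.1, c10.2, mLab1 h⟩,
        ⟨_, c01.1, c01.2, mLab1 h⟩, ⟨_, c11.1, c11.2, mLab1 h⟩]
    have hC : ∃ C, C ∈ Q ∧ dist C (gp i j) ≤ 1/((k:ℝ)+1) ∧ 0 ≤ (F C).2 := by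
      rcases h2 with h | h | h | h
      exacts [⟨_, c00.1, c00.2, mLab2 h⟩, ⟨_, c10.1, c10.2, mLab2 h⟩,
        ⟨_, c01.1, c01.2, mLab2 h⟩, ⟨_, c11.1, c11.2, mLab2 h⟩]
    obtain ⟨A, hAQ, hAd, hAF⟩ := hA
    obtain ⟨B, hBQ, hBd, hBF1, hBF2⟩ := hB'
    obtain ⟨C, hCQ, hCd, hCF⟩ := hC
    refine ⟨gp i j, A, B, C, hmem i (by omega) j (by omega), hAQ, hBQ, hCQ,
      ?_, ?_, ?_, hAF, hBF1, hBF2, hCF⟩ <;> push_cast <;> assumption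
  choose P A B C hPQ hAQ hBQ hCQ hAd hBd hCd hAF hBF1 hBF2 hCF using main
  have hQc : IsCompact Q := (isCompact_Icc).prod (isCompact_Icc)
  obtain ⟨z, hzQ, φ, hφ, hPz⟩ := hQc.tendsto_subseq hPQ
  have hlim0 : Tendsto (fun k : ℕ => 1/((k:ℝ)+1)) atTop (𝓝 0) :=
    tendsto_one_div_add_atTop_nhds_zero_nat
  have key : ∀ (G : ℕ → ℝ × ℝ), (∀ k, G k ∈ Q) → (∀ k, dist (G k) (P k) ≤ 1/((k:ℝ)+1)) →
      Tendsto (F ∘ G ∘ φ) atTop (𝓝 (F z)) := by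
    intro G hGQ hGd
    have hGz : Tendsto (G ∘ φ) atTop (𝓝 z) := by
      apply hPz.congr_dist
      apply squeeze_zero (fun k => dist_nonneg) (fun k => ?_) hlim0
      calc dist (P (φ k)) (G (φ k)) = dist (G (φ k)) (P (φ k)) := dist_comm _ _
        _ ≤ 1/((φ k : ℝ)+1) := hGd (φ k)
        _ ≤ 1/((k:ℝ)+1) := by
            apply one_div_le_one_div_of_le (by positivity)
            have : (k:ℝ) ≤ (φ k : ℝ) := by exact_mod_cast hφ.le_apply
            linarith
    have hGzQ : Tendsto (G ∘ φ) atTop (𝓝[Q] z) := by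
      apply tendsto_nhdsWithin_of_tendsto_nhds_of_eventually_within _ hGz
      exact Eventually.of_forall fun k => hGQ (φ k)
    exact (hF z hzQ).tendsto.comp hGzQ
  have t1 : Tendsto (fun k => (F (A (φ k))).1) atTop (𝓝 (F z).1) :=
    (continuous_fst.tendsto _).comp (key A hAQ hAd)
  have t2 : Tendsto (fun k => (F (B (φ k))).1) atTop (𝓝 (F z).1) :=
    (continuous_fst.tendsto _).comp (key B hBQ hBd)
  have t3 : Tendsto (fun k => (F (B (φ k))).2) atTop (𝓝 (F z).2) :=
    (continuous_snd.tendsto _).comp (key B hBQ hBd)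
  have t4 : Tendsto (fun k => (F (C (φ k))).2) atTop (𝓝 (F z).2) :=
    (continuous_snd.tendsto _).comp (key C hCQ hCd)
  have e1 : (F z).1 ≤ 0 := le_of_tendsto' t1 fun k => (hAF (φ k)).le
  have e2 : 0 ≤ (F z).1 := ge_of_tendsto' t2 fun k => hBF1 (φ k)
  have e3 : (F z).2 ≤ 0 := le_of_tendsto' t3 fun k => (hBF2 (φ k)).le
  have e4 : 0 ≤ (F z).2 := ge_of_tendsto' t4 fun k => hCF (φ k)
  exact ⟨z, hzQ, Prod.ext (le_antisymm e1 e2) (le_antisymm e3 e4)⟩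


lemma face_surj (f : ℝ × ℝ → ℝ × ℝ)
    (hf : ContinuousOn f (Icc (0:ℝ) 1 ×ˢ Icc (0:ℝ) 1))
    (hL : ∀ y ∈ Icc (0:ℝ) 1, (f (0, y)).1 = 0)
    (hR : ∀ y ∈ Icc (0:ℝ) 1, (f (1, y)).1 = 1)
    (hD : ∀ x ∈ Icc (0:ℝ) 1, (f (x, 0)).2 = 0)
    (hU : ∀ x ∈ Icc (0:ℝ) 1, (f (x, 1)).2 = 1)
    (p : ℝ × ℝ) (hp : p ∈ Icc (0:ℝ) 1 ×ˢ Icc (0:ℝ) 1) :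
    ∃ x ∈ Icc (0:ℝ) 1 ×ˢ Icc (0:ℝ) 1, f x = p := by
  classical
  set Q : Set (ℝ × ℝ) := Icc (0:ℝ) 1 ×ˢ Icc (0:ℝ) 1 with hQdef
  obtain ⟨⟨hp10, hp11⟩, hp20, hp21⟩ := hp
  set pk : ℕ → ℝ × ℝ := fun k =>
    p + (1/((k:ℝ)+1)) • (((1:ℝ)/2, (1:ℝ)/2) - p) with hpk
  have hek : ∀ k : ℕ, 0 < 1/((k:ℝ)+1) ∧ 1/((k:ℝ)+1) ≤ 1 := by
    intro k
    constructor
    · positivity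
    · rw [div_le_one (by positivity)]
      have : (0:ℝ) ≤ k := Nat.cast_nonneg k
      linarith
  have hpk1 : ∀ k, (pk k).1 ∈ Ioo (0:ℝ) 1 ∧ (pk k).2 ∈ Ioo (0:ℝ) 1 := by
    intro k
    obtain ⟨he0, he1⟩ := hek k
    set e := 1/((k:ℝ)+1)
    have c1 : (pk k).1 = p.1 + e * (1/2 - p.1) := rfl
    have c2 : (pk k).2 = p.2 + e * (1/2 - p.2) := rfl
    rw [c1, c2]
    constructor <;> constructor <;> nlinarith
  have hsolve : ∀ k : ℕ, ∃ x ∈ Q, f x = pk k := by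
    intro k
    obtain ⟨⟨ha1, ha2⟩, hb1, hb2⟩ := hpk1 k
    have := miranda2d (fun z => f z - pk k) (hf.sub continuousOn_const)
      (fun y hy => ?_) (fun y hy => ?_) (fun x hx => ?_) (fun x hx => ?_)
    · obtain ⟨z, hz, hz0⟩ := this
      exact ⟨z, hz, by rwa [sub_eq_zero] at hz0⟩
    · have : (f (0, y)).1 = 0 := hL y hy
      simp only [Prod.fst_sub, this]
      linarith
    · have : (f (1, y)).1 = 1 := hR y hy
      simp only [Prod.fst_sub, this]
      linarith
    · have : (f (x, 0)).2 = 0 := hD x hx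
      simp only [Prod.snd_sub, this]
      linarith
    · have : (f (x, 1)).2 = 1 := hU x hx
      simp only [Prod.snd_sub, this]
      linarith
  choose x hxQ hfx using hsolve
  have hQc : IsCompact Q := isCompact_Icc.prod isCompact_Icc
  obtain ⟨z, hzQ, φ, hφ, hxz⟩ := hQc.tendsto_subseq hxQ
  have hpk_lim : Tendsto pk atTop (𝓝 p) := by
    have h0 : Tendsto (fun k : ℕ => 1/((k:ℝ)+1)) atTop (𝓝 0) :=
      tendsto_one_div_add_atTop_nhds_zero_nat
    have := (h0.smul_const (((1:ℝ)/2, (1:ℝ)/2) - p)).const_add p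
    rw [hpk]; simpa using this
  have hxzQ : Tendsto (x ∘ φ) atTop (𝓝[Q] z) := by
    apply tendsto_nhdsWithin_of_tendsto_nhds_of_eventually_within _ hxz
    exact Eventually.of_forall fun k => hxQ (φ k)
  have h1 : Tendsto (f ∘ x ∘ φ) atTop (𝓝 (f z)) := (hf z hzQ).tendsto.comp hxzQ
  have h2 : Tendsto (f ∘ x ∘ φ) atTop (𝓝 p) := by
    have : (f ∘ x ∘ φ) = pk ∘ φ := by
      funext k; exact hfx (φ k)
    rw [this]
    exact hpk_lim.comp hφ.tendsto_atTop
  exact ⟨z, hzQ, tendsto_nhds_unique h1 h2⟩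



/-- open conditions forcing a side to be contained in the minimal face -/
def komOcond : Option Bool → Set ℝ
  | none => Set.Ioo 0 1
  | some false => Set.Iio 1
  | some true => Set.Ioi 0

lemma komOcond_open (o : Option Bool) : IsOpen (komOcond o) := by
  rcases o with _ | b
  · exact isOpen_Ioo
  · cases b
    · exact isOpen_Iio
    · exact isOpen_Ioi

lemma komiyaSide_subset (o : Option Bool) : komiyaSide o ⊆ Icc 0 1 := by
  rcases o with _ | b
  · exact subset_rfl
  · cases b
    · exact singleton_subset_iff.mpr ⟨le_rfl, zero_le_one⟩
    · exact singleton_subset_iff.mpr ⟨zero_le_one, le_rfl⟩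

lemma komiyaSide_nonempty (o : Option Bool) : (komiyaSide o).Nonempty := by
  rcases o with _ | b
  · exact ⟨0, le_rfl, zero_le_one⟩
  · cases b
    · exact ⟨0, rfl⟩
    · exact ⟨1, rfl⟩

lemma komOcond_zero {o : Option Bool} (h : (0:ℝ) ∈ komOcond o) : o = some false := by
  rcases o with _ | b
  · simp only [komOcond, Set.mem_Ioo, lt_self_iff_false, false_and] at h
  · cases b
    · rfl
    · simp only [komOcond, Set.mem_Ioi, lt_self_iff_false] at h

lemma komOcond_one {o : Option Bool} (h : (1:ℝ) ∈ komOcond o) : o = some true := by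
  rcases o with _ | b
  · simp only [komOcond, Set.mem_Ioo, lt_self_iff_false, and_false] at h
  · cases b
    · simp only [komOcond, Set.mem_Iio, lt_self_iff_false] at h
    · rfl

/-- the minimal-face side index of a coordinate value -/
noncomputable def komSigma (t : ℝ) : Option Bool :=
  if t = 0 then some false else if t = 1 then some true else none

lemma komSigma_mem {t : ℝ} (h : t ∈ Icc (0:ℝ) 1) : t ∈ komiyaSide (komSigma t) := by
  unfold komSigma
  split_ifs with h0 h1
  · subst h0; rfl
  · subst h1; rfl
  · exact h

lemma komSigma_sub {t : ℝ} (h : t ∈ Icc (0:ℝ) 1) {o : Option Bool}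
    (hsub : komiyaSide o ⊆ komiyaSide (komSigma t)) : t ∈ komOcond o := by
  unfold komSigma at hsub
  rcases o with _ | b
  · -- o = none : Icc ⊆ side σ t forces σ t = none
    split_ifs at hsub with h0 h1
    · exact absurd (Set.mem_singleton_iff.mp
        (hsub (⟨zero_le_one, le_rfl⟩ : (1:ℝ) ∈ Icc (0:ℝ) 1))) one_ne_zero
    · exact absurd (Set.mem_singleton_iff.mp
        (hsub (⟨le_rfl, zero_le_one⟩ : (0:ℝ) ∈ Icc (0:ℝ) 1))).symm one_ne_zero
    · exact ⟨lt_of_le_of_ne h.1 (Ne.symm h0), lt_of_le_of_ne h.2 h1⟩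
  · cases b
    · -- some false : need t < 1
      split_ifs at hsub with h0 h1
      · subst h0; norm_num [komOcond]
      · exact absurd (Set.mem_singleton_iff.mp (hsub rfl)).symm one_ne_zero
      · exact lt_of_le_of_ne h.2 h1
    · -- some true : need 0 < t
      split_ifs at hsub with h0 h1
      · exact absurd (Set.mem_singleton_iff.mp (hsub rfl)) one_ne_zero
      · subst h1; norm_num [komOcond]
      · exact lt_of_le_of_ne h.1 (Ne.symm h0)

end KomiyaAux

/-- Komiya's polytopal KKMS theorem for the square Q = Δ₁ × Δ₁: given a point q(F) in
each face F and open (in Q) sets B_F with every face F' covered by the B_F over faces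
F ⊆ F', there is a collection 𝓕 of faces with q(Q) ∈ conv{q(F) : F ∈ 𝓕} and
⋂_{F ∈ 𝓕} B_F ≠ ∅. -/
theorem stmt15 (q : Option Bool × Option Bool → ℝ × ℝ)
    (hq : ∀ m, q m ∈ komiyaFace m)
    (B : Option Bool × Option Bool → Set (ℝ × ℝ))
    (hBopen : ∀ m, ∃ U : Set (ℝ × ℝ), IsOpen U ∧ B m = U ∩ komiyaFace (none, none))
    (hcover : ∀ m', komiyaFace m' ⊆ ⋃ m ∈ {m | komiyaFace m ⊆ komiyaFace m'}, B m) :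
    ∃ 𝓕 : Finset (Option Bool × Option Bool),
      q (none, none) ∈ convexHull ℝ (q '' ↑𝓕) ∧ (⋂ m ∈ 𝓕, B m).Nonempty := by
  classical
  set Q : Set (ℝ × ℝ) := Icc (0:ℝ) 1 ×ˢ Icc (0:ℝ) 1 with hQdef
  have hQface : komiyaFace (none, none) = Q := rfl
  choose U hUopen hBU using hBopen
  set O : Option Bool × Option Bool → Set (ℝ × ℝ) :=
    fun m => komOcond m.1 ×ˢ komOcond m.2 with hO
  set V : Option Bool × Option Bool → Set (ℝ × ℝ) :=
    fun m => (U m ∩ O m) ∩ Metric.ball (0 : ℝ × ℝ) 9 with hV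
  have hVopen : ∀ m, IsOpen (V m) :=
    fun m => (((hUopen m).inter ((komOcond_open m.1).prod (komOcond_open m.2))).inter
      Metric.isOpen_ball)
  have hVcne : ∀ m, ((V m)ᶜ).Nonempty := by
    intro m
    refine ⟨((10:ℝ), (0:ℝ)), fun hmem => ?_⟩
    have h : dist (((10:ℝ), (0:ℝ)) : ℝ × ℝ) (0 : ℝ × ℝ) < 9 := hmem.2
    rw [Prod.dist_eq] at h
    have h4 : dist (((10:ℝ), (0:ℝ)) : ℝ × ℝ).1 ((0 : ℝ × ℝ)).1 < 9 :=
      (le_max_left _ _).trans_lt h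
    have h5 : dist (10:ℝ) (0:ℝ) < 9 := h4
    rw [Real.dist_eq] at h5
    norm_num at h5
  have hQball : ∀ x ∈ Q, x ∈ Metric.ball (0 : ℝ × ℝ) 9 := by
    rintro x ⟨⟨h1, h2⟩, h3, h4⟩
    rw [Metric.mem_ball, Prod.dist_eq]
    have e1 : dist x.1 (0 : ℝ × ℝ).1 = |x.1| := by
      rw [Real.dist_eq, Prod.fst_zero, sub_zero]
    have e2 : dist x.2 (0 : ℝ × ℝ).2 = |x.2| := by
      rw [Real.dist_eq, Prod.snd_zero, sub_zero]
    rw [e1, e2]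
    apply max_lt <;> rw [abs_lt] <;> constructor <;> linarith
  -- cover : every x in Q lies in some B m ∩ O m
  have hcov : ∀ x ∈ Q, ∃ m, x ∈ B m ∧ x ∈ O m := by
    intro x hx
    obtain ⟨⟨hx10, hx11⟩, hx20, hx21⟩ := hx
    have hx1 : x.1 ∈ Icc (0:ℝ) 1 := ⟨hx10, hx11⟩
    have hx2 : x.2 ∈ Icc (0:ℝ) 1 := ⟨hx20, hx21⟩
    have hxm : x ∈ komiyaFace (komSigma x.1, komSigma x.2) :=
      ⟨komSigma_mem hx1, komSigma_mem hx2⟩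
    have := hcover _ hxm
    rw [mem_iUnion₂] at this
    obtain ⟨m, hsub, hxB⟩ := this
    have hsub' : komiyaSide m.1 ⊆ komiyaSide (komSigma x.1) ∧
        komiyaSide m.2 ⊆ komiyaSide (komSigma x.2) := by
      rcases (Set.prod_subset_prod_iff.mp hsub) with h | h | h
      · exact h
      · exact absurd h (komiyaSide_nonempty m.1).ne_empty
      · exact absurd h (komiyaSide_nonempty m.2).ne_empty
    exact ⟨m, hxB, komSigma_sub hx1 hsub'.1, komSigma_sub hx2 hsub'.2⟩
  -- partition of unity
  set φ : Option Bool × Option Bool → ℝ × ℝ → ℝ :=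
    fun m x => Metric.infDist x (V m)ᶜ with hφdef
  have hφcont : ∀ m, Continuous (φ m) := fun m => Metric.continuous_infDist_pt _
  have hφnn : ∀ m x, 0 ≤ φ m x := fun m x => Metric.infDist_nonneg
  have hφpos : ∀ m x, x ∈ V m → 0 < φ m x := by
    intro m x hx
    exact ((hVopen m).isClosed_compl.notMem_iff_infDist_pos (hVcne m)).mp
      (by simpa using hx)
  have hφmem : ∀ m x, φ m x ≠ 0 → x ∈ V m := by
    intro m x hne
    by_contra hx
    exact hne (Metric.infDist_zero_of_mem hx)
  set T : ℝ × ℝ → ℝ := fun x => ∑ m : Option Bool × Option Bool, φ m x with hT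
  have hTcont : Continuous T := continuous_finset_sum _ fun m _ => hφcont m
  have hTpos : ∀ x ∈ Q, 0 < T x := by
    intro x hx
    obtain ⟨m, hmB, hmO⟩ := hcov x hx
    have hxV : x ∈ V m := by
      refine ⟨⟨?_, hmO⟩, hQball x hx⟩
      have := hBU m ▸ hmB
      exact this.1
    exact Finset.sum_pos' (fun m _ => hφnn m x) ⟨m, Finset.mem_univ m, hφpos m x hxV⟩
  set S : ℝ × ℝ → ℝ × ℝ := fun x => ∑ m : Option Bool × Option Bool, φ m x • q m with hS
  have hScont : Continuous S := continuous_finset_sum _ fun m _ => (hφcont m).smul continuous_const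
  set f : ℝ × ℝ → ℝ × ℝ := fun x => (T x)⁻¹ • S x with hf
  have hfcont : ContinuousOn f Q := by
    apply ContinuousOn.smul (f := fun x => (T x)⁻¹) (g := S)
    · exact (hTcont.continuousOn).inv₀ fun x hx => (hTpos x hx).ne'
    · exact hScont.continuousOn
  -- components
  have hS1 : ∀ x, (S x).1 = ∑ m : Option Bool × Option Bool, φ m x * (q m).1 := by
    intro x
    rw [hS]
    rw [Prod.fst_sum]
    rfl
  have hS2 : ∀ x, (S x).2 = ∑ m : Option Bool × Option Bool, φ m x * (q m).2 := by
    intro x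
    rw [hS]
    rw [Prod.snd_sum]
    rfl
  have hq1 : ∀ m, (q m).1 ∈ komiyaSide m.1 := fun m => (hq m).1
  have hq2 : ∀ m, (q m).2 ∈ komiyaSide m.2 := fun m => (hq m).2
  have hq1I : ∀ m, (q m).1 ∈ Icc (0:ℝ) 1 := fun m => komiyaSide_subset m.1 (hq1 m)
  have hq2I : ∀ m, (q m).2 ∈ Icc (0:ℝ) 1 := fun m => komiyaSide_subset m.2 (hq2 m)
  -- generic component bound
  have hcomp : ∀ x ∈ Q, ∀ (g : Option Bool × Option Bool → ℝ),
      (∀ m, g m ∈ Icc (0:ℝ) 1) →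
      (T x)⁻¹ * (∑ m : Option Bool × Option Bool, φ m x * g m) ∈ Icc (0:ℝ) 1 := by
    intro x hx g hg
    have hTx := hTpos x hx
    constructor
    · apply mul_nonneg (inv_nonneg.mpr hTx.le)
      exact Finset.sum_nonneg fun m _ => mul_nonneg (hφnn m x) (hg m).1
    · have hle : (∑ m : Option Bool × Option Bool, φ m x * g m) ≤ T x := by
        rw [hT]
        apply Finset.sum_le_sum
        intro m _
        calc φ m x * g m ≤ φ m x * 1 := by
              apply mul_le_mul_of_nonneg_left (hg m).2 (hφnn m x)
          _ = φ m x := mul_one _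
      calc (T x)⁻¹ * (∑ m : Option Bool × Option Bool, φ m x * g m)
          ≤ (T x)⁻¹ * T x := by
            apply mul_le_mul_of_nonneg_left hle (inv_nonneg.mpr hTx.le)
        _ = 1 := inv_mul_cancel₀ hTx.ne'
  -- active faces are constrained on edges
  have hactive : ∀ x, ∀ m, φ m x ≠ 0 → x ∈ O m := fun x m h => (hφmem m x h).1.2
  have hedge1 : ∀ x ∈ Q, x.1 = 0 → (f x).1 = 0 := by
    intro x hx h0
    have : (S x).1 = 0 := by
      rw [hS1]
      apply Finset.sum_eq_zero
      intro m _
      rcases eq_or_ne (φ m x) 0 with h | h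
      · rw [h, zero_mul]
      · have hO1 : x.1 ∈ komOcond m.1 := (hactive x m h).1
        rw [h0] at hO1
        have := komOcond_zero hO1
        have hqm := hq1 m
        rw [this] at hqm
        rw [hqm, mul_zero]
    rw [hf]
    simp only [Prod.smul_fst, this, smul_eq_mul, mul_zero]
  have hedge2 : ∀ x ∈ Q, x.1 = 1 → (f x).1 = 1 := by
    intro x hx h1
    have : (S x).1 = T x := by
      rw [hS1, hT]
      apply Finset.sum_congr rfl
      intro m _
      rcases eq_or_ne (φ m x) 0 with h | h
      · rw [h, zero_mul]
      · have hO1 : x.1 ∈ komOcond m.1 := (hactive x m h).1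
        rw [h1] at hO1
        have := komOcond_one hO1
        have hqm := hq1 m
        rw [this] at hqm
        rw [hqm, mul_one]
    rw [hf]
    simp only [Prod.smul_fst, this, smul_eq_mul]
    exact inv_mul_cancel₀ (hTpos x hx).ne'
  have hedge3 : ∀ x ∈ Q, x.2 = 0 → (f x).2 = 0 := by
    intro x hx h0
    have : (S x).2 = 0 := by
      rw [hS2]
      apply Finset.sum_eq_zero
      intro m _
      rcases eq_or_ne (φ m x) 0 with h | h
      · rw [h, zero_mul]
      · have hO2 : x.2 ∈ komOcond m.2 := (hactive x m h).2
        rw [h0] at hO2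
        have := komOcond_zero hO2
        have hqm := hq2 m
        rw [this] at hqm
        rw [hqm, mul_zero]
    rw [hf]
    simp only [Prod.smul_snd, this, smul_eq_mul, mul_zero]
  have hedge4 : ∀ x ∈ Q, x.2 = 1 → (f x).2 = 1 := by
    intro x hx h1
    have : (S x).2 = T x := by
      rw [hS2, hT]
      apply Finset.sum_congr rfl
      intro m _
      rcases eq_or_ne (φ m x) 0 with h | h
      · rw [h, zero_mul]
      · have hO2 : x.2 ∈ komOcond m.2 := (hactive x m h).2
        rw [h1] at hO2
        have := komOcond_one hO2
        have hqm := hq2 m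
        rw [this] at hqm
        rw [hqm, mul_one]
    rw [hf]
    simp only [Prod.smul_snd, this, smul_eq_mul]
    exact inv_mul_cancel₀ (hTpos x hx).ne'
  -- p
  set p : ℝ × ℝ := q (none, none) with hp
  have hpQ : p ∈ Q := by
    have := hq (none, none)
    exact ⟨komiyaSide_subset none this.1, komiyaSide_subset none this.2⟩
  -- surjectivity
  obtain ⟨x, hxQ, hfx⟩ := face_surj f hfcont
    (fun y hy => hedge1 (0, y) ⟨left_mem_Icc.mpr zero_le_one, hy⟩ rfl)
    (fun y hy => hedge2 (1, y) ⟨right_mem_Icc.mpr zero_le_one, hy⟩ rfl)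
    (fun t ht => hedge3 (t, 0) ⟨ht, left_mem_Icc.mpr zero_le_one⟩ rfl)
    (fun t ht => hedge4 (t, 1) ⟨ht, right_mem_Icc.mpr zero_le_one⟩ rfl)
    p hpQ
  -- conclusion
  set 𝓕 : Finset (Option Bool × Option Bool) :=
    Finset.univ.filter (fun m => φ m x ≠ 0) with h𝓕
  refine ⟨𝓕, ?_, ⟨x, ?_⟩⟩
  · have hws : 0 < ∑ m ∈ 𝓕, φ m x := by
      rw [h𝓕, Finset.sum_filter_ne_zero]
      exact hTpos x hxQ
    have hcm := Finset.centerMass_mem_convexHull 𝓕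
      (fun m _ => hφnn m x) hws (s := q '' ↑𝓕)
      (z := q) (fun m hm => Set.mem_image_of_mem q (by exact_mod_cast hm))
    have hsum1 : ∑ m ∈ 𝓕, φ m x = ∑ m : Option Bool × Option Bool, φ m x := by
      rw [h𝓕, Finset.sum_filter_ne_zero]
    have hsum2 : ∑ m ∈ 𝓕, φ m x • q m = ∑ m : Option Bool × Option Bool, φ m x • q m := by
      rw [h𝓕]
      apply Finset.sum_filter_of_ne
      intro m _ hne h
      exact hne (by rw [h, zero_smul])
    have hcM : 𝓕.centerMass (fun m => φ m x) q = p := by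
      show (∑ m ∈ 𝓕, φ m x)⁻¹ • ∑ m ∈ 𝓕, φ m x • q m = p
      rw [hsum1, hsum2]
      exact hfx
    rwa [hcM] at hcm
  · rw [Set.mem_iInter₂]
    intro m hm
    rw [h𝓕, Finset.mem_filter] at hm
    have hxV := hφmem m x hm.2
    rw [hBU m, hQface]
    exact ⟨hxV.1.1, hxQ⟩
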